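/- Let Ψ̂: S¹ → ℝ be continuous with Ψ̂ ≥ C₀ > 0 and (1/(2π)) ∫_{S¹} Ψ̂ dH¹ = 1. Define γ(β, Q) = −(1/π) ∫_{S¹} Ψ̂(Qy) log(β y₁² + (2−β) y₂²) dH¹(y) for β ∈ [0,2] and Q ∈ SO(2). Then γ is continuous on the compact set [0,2] × SO(2), attains its minimum at some (β₀, Q₀), and β₀ ∈ (0,2). -/

import Mathlib

open Real MeasureTheory

abbrev Plane := EuclideanSpace ℝ (Fin 2)

/-- Rotation of the plane by angle `θ` (parametrising `SO(2)`). -/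
noncomputable def rot (θ : ℝ) (y : Plane) : Plane :=
  (EuclideanSpace.equiv (Fin 2) ℝ).symm
    ![Real.cos θ * y 0 - Real.sin θ * y 1, Real.sin θ * y 0 + Real.cos θ * y 1]

open scoped ENNReal NNReal
set_option maxHeartbeats 1000000

namespace RE

noncomputable def S : Set Plane := Metric.sphere (0 : Plane) 1

lemma normsq (y : Plane) : ‖y‖^2 = (y 0)^2 + (y 1)^2 := by
  rw [EuclideanSpace.norm_eq]
  rw [Real.sq_sqrt (by positivity)]
  simp [Fin.sum_univ_two, sq_abs]

lemma mem_S_iff (y : Plane) : y ∈ S ↔ (y 0)^2 + (y 1)^2 = 1 := by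
  rw [S, mem_sphere_iff_norm, sub_zero, ← normsq]
  constructor
  · intro h; rw [h]; norm_num
  · intro h
    have h0 : 0 ≤ ‖y‖ := norm_nonneg y
    nlinarith

lemma measurable_S : MeasurableSet S := (Metric.isClosed_sphere).measurableSet

lemma S_eq : S = Metric.sphere (0 : Plane) 1 := rfl

noncomputable def pt (a b : ℝ) : Plane := (EuclideanSpace.equiv (Fin 2) ℝ).symm ![a, b]

lemma pt0 (a b : ℝ) : pt a b 0 = a := by simp [pt, EuclideanSpace.equiv]
lemma pt1 (a b : ℝ) : pt a b 1 = b := by simp [pt, EuclideanSpace.equiv]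

lemma dist_pt (a b c d : ℝ) : dist (pt a b) (pt c d) = Real.sqrt ((a-c)^2 + (b-d)^2) := by
  rw [EuclideanSpace.dist_eq]
  simp [Fin.sum_univ_two, pt0, pt1, Real.dist_eq, sq_abs]

noncomputable def crv (t : ℝ) : Plane := pt (Real.cos t) (Real.sin t)

lemma lipschitz_crv : LipschitzWith 1 crv := by
  apply LipschitzWith.of_dist_le_mul
  intro s t
  rw [crv, crv, dist_pt]; norm_num
  have key : (Real.cos s - Real.cos t)^2 + (Real.sin s - Real.sin t)^2 = 2 - 2 * Real.cos (s - t) := by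
    have := Real.cos_sub s t
    nlinarith [Real.sin_sq_add_cos_sq s, Real.sin_sq_add_cos_sq t]
  rw [key]
  have h1 : 2 - 2 * Real.cos (s - t) ≤ (s - t)^2 := by
    have hc : Real.cos (s-t) = 2 * Real.cos ((s-t)/2)^2 - 1 := by
      rw [← Real.cos_two_mul]; ring_nf
    have hs : Real.sin ((s-t)/2)^2 ≤ ((s-t)/2)^2 := Real.sin_sq_le_sq
    nlinarith [Real.sin_sq_add_cos_sq ((s-t)/2)]
  calc Real.sqrt (2 - 2*Real.cos (s-t)) ≤ Real.sqrt ((s-t)^2) := Real.sqrt_le_sqrt h1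
    _ = |s - t| := Real.sqrt_sq_eq_abs _
    _ = dist s t := (Real.dist_eq s t).symm

lemma lipschitz_proj (j : Fin 2) : LipschitzWith 1 (fun y : Plane => y j) := by
  apply LipschitzWith.of_dist_le_mul
  intro x y
  norm_num; rw [EuclideanSpace.dist_eq, Real.dist_eq, ← Real.sqrt_sq_eq_abs]
  apply Real.sqrt_le_sqrt
  have := Finset.single_le_sum (f := fun i => dist (x i) (y i) ^ 2)
    (fun i _ => by positivity) (Finset.mem_univ j)
  simpa [Real.dist_eq, sq_abs] using this

-- image measure bound helper
lemma hm_image_le (f : Plane → ℝ) (hf : LipschitzWith 1 f) (A : Set Plane) :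
    μH[1] (f '' A) ≤ μH[1] A := by
  simpa using hf.hausdorffMeasure_image_le (by norm_num : (0:ℝ) ≤ 1) A

lemma hm_image_le' (f : ℝ → Plane) (hf : LipschitzWith 1 f) (A : Set ℝ) :
    μH[1] (f '' A) ≤ μH[1] A := by
  simpa using hf.hausdorffMeasure_image_le (by norm_num : (0:ℝ) ≤ 1) A

/-- Upper bound near the x-axis. -/
lemma upper1 {ε : ℝ} (hε : 0 < ε) (hε1 : ε ≤ 1) :
    μH[1] ({y : Plane | |y 1| ≤ ε} ∩ S) ≤ ENNReal.ofReal (2 * π * ε) := by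
  set a := Real.arcsin ε with ha
  have ha0 : 0 < a := Real.arcsin_pos.2 hε
  have hapi : a ≤ π / 2 := Real.arcsin_le_pi_div_two ε
  have hsa : Real.sin a = ε := Real.sin_arcsin (by linarith) hε1
  have hsub : {y : Plane | |y 1| ≤ ε} ∩ S ⊆
      crv '' (Set.Icc (-a) a) ∪ crv '' (Set.Icc (π - a) (π + a)) := by
    rintro y ⟨hy1, hyS⟩
    rw [Set.mem_setOf_eq] at hy1
    have hnorm := (mem_S_iff y).1 hyS
    have hy1' : -1 ≤ y 1 ∧ y 1 ≤ 1 := abs_le.1 (le_trans hy1 hε1)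
    have harc : -a ≤ Real.arcsin (y 1) ∧ Real.arcsin (y 1) ≤ a := by
      constructor
      · rw [ha, ← Real.arcsin_neg]
        exact Real.monotone_arcsin (neg_le_of_abs_le hy1)
      · exact Real.monotone_arcsin (le_of_abs_le hy1)
    have hsin : Real.sin (Real.arcsin (y 1)) = y 1 := Real.sin_arcsin hy1'.1 hy1'.2
    have hcos : Real.cos (Real.arcsin (y 1)) = Real.sqrt (1 - (y 1)^2) := Real.cos_arcsin _
    have hsq : 1 - (y 1)^2 = (y 0)^2 := by linarith
    rcases le_or_gt 0 (y 0) with h0 | h0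
    · left
      refine ⟨Real.arcsin (y 1), ⟨harc.1, harc.2⟩, ?_⟩
      have : Real.cos (Real.arcsin (y 1)) = y 0 := by
        rw [hcos, hsq, Real.sqrt_sq h0]
      ext i
      fin_cases i
      · simpa [crv, pt0] using this
      · simpa [crv, pt1] using hsin
    · right
      refine ⟨π - Real.arcsin (y 1), ⟨by linarith [harc.2], by linarith [harc.1]⟩, ?_⟩
      have hc : Real.cos (π - Real.arcsin (y 1)) = y 0 := by
        rw [Real.cos_pi_sub, hcos, hsq]
        rw [Real.sqrt_sq_eq_abs, abs_of_neg h0]; ring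
      have hs : Real.sin (π - Real.arcsin (y 1)) = y 1 := by
        rw [Real.sin_pi_sub]; exact hsin
      ext i
      fin_cases i
      · simpa [crv, pt0] using hc
      · simpa [crv, pt1] using hs
  calc μH[1] ({y : Plane | |y 1| ≤ ε} ∩ S)
      ≤ μH[1] (crv '' (Set.Icc (-a) a)) + μH[1] (crv '' (Set.Icc (π - a) (π + a))) :=
        le_trans (measure_mono hsub) (measure_union_le _ _)
    _ ≤ μH[1] (Set.Icc (-a) a) + μH[1] (Set.Icc (π - a) (π + a)) :=
        add_le_add (hm_image_le' _ lipschitz_crv _) (hm_image_le' _ lipschitz_crv _)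
    _ = ENNReal.ofReal (2*a) + ENNReal.ofReal (2*a) := by
        rw [MeasureTheory.hausdorffMeasure_real, Real.volume_Icc, Real.volume_Icc]
        ring_nf
    _ ≤ ENNReal.ofReal (2 * π * ε) := by
        rw [← ENNReal.ofReal_add (by linarith) (by linarith)]
        apply ENNReal.ofReal_le_ofReal
        have := Real.mul_le_sin (le_of_lt ha0) hapi
        rw [hsa] at this
        have hπ : 0 < π := Real.pi_pos
        rw [div_mul_eq_mul_div, div_le_iff₀ hπ] at this
        nlinarith

noncomputable def sw (y : Plane) : Plane := pt (y 1) (y 0)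

lemma lipschitz_sw : LipschitzWith 1 sw := by
  apply LipschitzWith.of_dist_le_mul
  intro x y
  norm_num
  have h1 : dist (sw x) (sw y) = Real.sqrt ((x 1 - y 1)^2 + (x 0 - y 0)^2) := by
    rw [sw, sw, dist_pt]
  have h2 : dist x y = Real.sqrt ((x 0 - y 0)^2 + (x 1 - y 1)^2) := by
    rw [EuclideanSpace.dist_eq]; simp [Fin.sum_univ_two, Real.dist_eq, sq_abs]
  rw [h1, h2, add_comm]

lemma sw_mem_S {y : Plane} (hy : y ∈ S) : sw y ∈ S := by
  rw [mem_S_iff] at hy ⊢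
  rw [sw, pt0, pt1]; linarith

lemma sw_sw (y : Plane) : sw (sw y) = y := by
  ext i; fin_cases i <;> simp [sw, pt0, pt1]

lemma upper0 {ε : ℝ} (hε : 0 < ε) (hε1 : ε ≤ 1) :
    μH[1] ({y : Plane | |y 0| ≤ ε} ∩ S) ≤ ENNReal.ofReal (2 * π * ε) := by
  have hsub : {y : Plane | |y 0| ≤ ε} ∩ S ⊆ sw '' ({y : Plane | |y 1| ≤ ε} ∩ S) := by
    rintro y ⟨hy0, hyS⟩
    exact ⟨sw y, ⟨by simpa [sw, pt1] using hy0, sw_mem_S hyS⟩, sw_sw y⟩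
  calc μH[1] ({y : Plane | |y 0| ≤ ε} ∩ S) ≤ μH[1] (sw '' ({y : Plane | |y 1| ≤ ε} ∩ S)) :=
        measure_mono hsub
    _ ≤ μH[1] ({y : Plane | |y 1| ≤ ε} ∩ S) := by
        simpa using lipschitz_sw.hausdorffMeasure_image_le (by norm_num : (0:ℝ) ≤ 1) _
    _ ≤ ENNReal.ofReal (2 * π * ε) := upper1 hε hε1

lemma upper (j : Fin 2) {ε : ℝ} (hε : 0 < ε) (hε1 : ε ≤ 1) :
    μH[1] ({y : Plane | |y j| ≤ ε} ∩ S) ≤ ENNReal.ofReal (2 * π * ε) := by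
  fin_cases j
  · exact upper0 hε hε1
  · exact upper1 hε hε1

lemma axis_null (j : Fin 2) : μH[1] ({y : Plane | y j = 0} ∩ S) = 0 := by
  refine le_antisymm ?_ zero_le
  have key : ∀ n : ℕ, μH[1] ({y : Plane | y j = 0} ∩ S) ≤ ENNReal.ofReal (2 * π * (1/(n+1))) := by
    intro n
    refine le_trans (measure_mono ?_) (upper j (by positivity) (by
      rw [div_le_one (by positivity)]; linarith [Nat.cast_nonneg (α := ℝ) n]))
    rintro y ⟨hy, hyS⟩
    refine ⟨by rw [Set.mem_setOf_eq, hy]; rw [abs_zero]; positivity, hyS⟩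
  have htend : Filter.Tendsto (fun n : ℕ => ENNReal.ofReal (2 * π * (1/(n+1)))) Filter.atTop (nhds 0) := by
    rw [← ENNReal.ofReal_zero]
    apply ENNReal.tendsto_ofReal
    have : Filter.Tendsto (fun n : ℕ => (1:ℝ)/(n+1)) Filter.atTop (nhds 0) := tendsto_one_div_add_atTop_nhds_zero_nat
    have := this.const_mul (2 * π)
    simpa using this
  exact le_of_tendsto_of_tendsto' tendsto_const_nhds htend key

lemma lower (j : Fin 2) {ε : ℝ} (hε : 0 < ε) (hε1 : ε ≤ 1) :
    ENNReal.ofReal ε ≤ μH[1] ({y : Plane | 0 < y j ∧ y j ≤ ε} ∩ S) := by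
  set A := {y : Plane | 0 < y j ∧ y j ≤ ε} ∩ S with hA
  have hsub : Set.Ioc 0 ε ⊆ (fun y : Plane => y j) '' A := by
    intro s hs
    obtain ⟨hs0, hsε⟩ := hs
    have hs1 : s ≤ 1 := le_trans hsε hε1
    have hsq : Real.sqrt (1 - s^2) ^ 2 = 1 - s^2 := Real.sq_sqrt (by nlinarith)
    set p : Plane := if j = 0 then pt s (Real.sqrt (1 - s^2)) else pt (Real.sqrt (1 - s^2)) s with hp
    have hpS : p ∈ S := by
      rw [mem_S_iff, hp]
      split <;> simp only [pt0, pt1] <;> nlinarith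
    have hpj : p j = s := by
      rw [hp]; fin_cases j <;> simp [pt0, pt1]
    exact ⟨p, ⟨⟨by rw [hpj]; exact hs0, by rw [hpj]; exact hsε⟩, hpS⟩, hpj⟩
  calc ENNReal.ofReal ε = μH[1] (Set.Ioc (0:ℝ) ε) := by
        rw [MeasureTheory.hausdorffMeasure_real, Real.volume_Ioc]; norm_num
    _ ≤ μH[1] ((fun y : Plane => y j) '' A) := measure_mono hsub
    _ ≤ μH[1] A := by
        simpa using (lipschitz_proj j).hausdorffMeasure_image_le (by norm_num : (0:ℝ) ≤ 1) A

lemma measurable_proj_sq (j : Fin 2) : Measurable (fun y : Plane => (y j)^2) := by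
  have : Continuous (fun y : Plane => y j) := by
    exact (EuclideanSpace.proj j).continuous
  exact (this.pow 2).measurable

lemma abs_coord_le_one {y : Plane} (hy : y ∈ S) (j : Fin 2) : |y j| ≤ 1 := by
  rw [mem_S_iff] at hy
  rw [← Real.sqrt_one, ← Real.sqrt_sq_eq_abs]
  apply Real.sqrt_le_sqrt
  fin_cases j
  · show (y 0)^2 ≤ 1; nlinarith [sq_nonneg (y 0), sq_nonneg (y 1)]
  · show (y 1)^2 ≤ 1; nlinarith [sq_nonneg (y 0), sq_nonneg (y 1)]

/-- Annuli decomposition: log-singularity is integrable on the circle. -/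
lemma log_lintegral_lt_top (j : Fin 2) :
    ∫⁻ y in S, ENNReal.ofReal |Real.log ((y j)^2)| ∂(μH[1] : Measure Plane) < ⊤ := by
  set f : Plane → ℝ≥0∞ := fun y => ENNReal.ofReal |Real.log ((y j)^2)| with hf
  set A : ℕ → Set Plane := fun k => {y : Plane | (2:ℝ)⁻¹^(k+1) < |y j| ∧ |y j| ≤ (2:ℝ)⁻¹^k} ∩ S with hA
  set N : Set Plane := {y : Plane | y j = 0} ∩ S with hN
  have hcover : S ⊆ N ∪ ⋃ k, A k := by
    intro y hy
    rcases eq_or_ne (y j) 0 with h0 | h0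
    · exact Or.inl ⟨h0, hy⟩
    · right
      have habs : 0 < |y j| := abs_pos.2 h0
      have hle1 : |y j| ≤ 1 := abs_coord_le_one hy j
      have hex : ∃ n : ℕ, (2:ℝ)⁻¹^n < |y j| := by
        obtain ⟨n, hn⟩ := exists_pow_lt_of_lt_one habs (by norm_num : (2:ℝ)⁻¹ < 1)
        exact ⟨n, hn⟩
      set n₀ := Nat.find hex with hn₀
      have hn₀spec : (2:ℝ)⁻¹^n₀ < |y j| := Nat.find_spec hex
      have hn₀pos : n₀ ≠ 0 := by
        intro h
        rw [h] at hn₀spec; simp at hn₀spec; linarith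
      obtain ⟨k, hk⟩ := Nat.exists_eq_succ_of_ne_zero hn₀pos
      refine Set.mem_iUnion.2 ⟨k, ⟨?_, ?_⟩, hy⟩
      · have hkk : (2:ℝ)⁻¹^(k+1) = (2:ℝ)⁻¹^n₀ := by rw [hk]
        rw [hkk]; exact hn₀spec
      · by_contra hcon
        push_neg at hcon
        classical
        have hle := Nat.find_le (h := hex) hcon
        rw [← hn₀] at hle
        omega
  have hmono : ∫⁻ y in S, f y ∂μH[1] ≤ ∫⁻ y in N ∪ ⋃ k, A k, f y ∂μH[1] :=
    lintegral_mono_set hcover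
  have hunion : ∫⁻ y in N ∪ ⋃ k, A k, f y ∂μH[1] ≤
      ∫⁻ y in N, f y ∂μH[1] + ∑' k, ∫⁻ y in A k, f y ∂μH[1] := by
    refine le_trans (lintegral_union_le _ _ _) ?_
    exact add_le_add le_rfl (lintegral_iUnion_le _ _)
  have hNzero : ∫⁻ y in N, f y ∂μH[1] = 0 := by
    rw [setLIntegral_measure_zero _ _ (axis_null j)]
  have hAk : ∀ k : ℕ, ∫⁻ y in A k, f y ∂μH[1] ≤
      ENNReal.ofReal (2*(k+1)) * ENNReal.ofReal (2 * π * (2:ℝ)⁻¹^k) := by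
    intro k
    have hb : ∀ y ∈ A k, f y ≤ ENNReal.ofReal (2*(k+1)) := by
      rintro y ⟨⟨hlo, hhi⟩, hyS⟩
      rw [hf]
      apply ENNReal.ofReal_le_ofReal
      have h2 : (0:ℝ) < (2:ℝ)⁻¹^(k+1) := by positivity
      have hsqlo : ((2:ℝ)⁻¹^(k+1))^2 < (y j)^2 := by
        rw [← sq_abs (y j)]; exact pow_lt_pow_left₀ hlo (le_of_lt h2) (by norm_num)
      have hsqhi : (y j)^2 ≤ 1 := by
        rw [← sq_abs (y j)]
        have := le_trans hhi (by
          apply pow_le_one₀ <;> norm_num : ((2:ℝ)⁻¹^k ≤ 1))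
        nlinarith [abs_nonneg (y j)]
      have hpos : (0:ℝ) < (y j)^2 := lt_trans (by positivity) hsqlo
      have hlog_le : Real.log ((y j)^2) ≤ 0 := Real.log_nonpos (by positivity) hsqhi
      have hlog_ge : Real.log (((2:ℝ)⁻¹^(k+1))^2) ≤ Real.log ((y j)^2) :=
        Real.log_le_log (by positivity) hsqlo.le
      have hval : Real.log (((2:ℝ)⁻¹^(k+1))^2) = (((k+1)*2 : ℕ) : ℝ) * (-Real.log 2) := by
        rw [← pow_mul, Real.log_pow, Real.log_inv]
      rw [abs_of_nonpos hlog_le]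
      have hlog2 : Real.log 2 ≤ 1 := by
        have := Real.log_le_sub_one_of_pos (by norm_num : (0:ℝ) < 2); linarith
      have hlog2' : (0:ℝ) ≤ Real.log 2 := Real.log_nonneg (by norm_num)
      rw [hval] at hlog_ge
      push_cast at hlog_ge
      nlinarith [hlog_ge]
    calc ∫⁻ y in A k, f y ∂μH[1] ≤ ∫⁻ _ in A k, ENNReal.ofReal (2*(k+1)) ∂μH[1] := by
          apply setLIntegral_mono' ?_ hb
          simp only [hA]
          have habs : Measurable (fun y : Plane => |y j|) :=
            ((EuclideanSpace.proj j).continuous.abs).measurable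
          have : {y : Plane | (2:ℝ)⁻¹^(k+1) < |y j| ∧ |y j| ≤ (2:ℝ)⁻¹^k} =
              (fun y : Plane => |y j|) ⁻¹' Set.Ioc ((2:ℝ)⁻¹^(k+1)) ((2:ℝ)⁻¹^k) := rfl
          exact ((habs measurableSet_Ioc).inter measurable_S)
      _ = ENNReal.ofReal (2*(k+1)) * μH[1] (A k) := by rw [setLIntegral_const]
      _ ≤ ENNReal.ofReal (2*(k+1)) * ENNReal.ofReal (2 * π * (2:ℝ)⁻¹^k) := by
          apply mul_le_mul_right ?_ _
          refine le_trans (measure_mono ?_) (upper j (by positivity) (by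
            apply pow_le_one₀ <;> norm_num))
          rintro y ⟨⟨_, hhi⟩, hyS⟩
          exact ⟨hhi, hyS⟩
  have hsum : ∑' k : ℕ, ∫⁻ y in A k, f y ∂μH[1] ≤
      ENNReal.ofReal (∑' k : ℕ, (2*((k:ℝ)+1)) * (2 * π * (2:ℝ)⁻¹^k)) := by
    have hsummable : Summable (fun k : ℕ => (2*((k:ℝ)+1)) * (2 * π * (2:ℝ)⁻¹^k)) := by
      have h1 : Summable (fun k : ℕ => (k:ℝ) * (2:ℝ)⁻¹^k) := by
        simpa using summable_pow_mul_geometric_of_norm_lt_one 1 (r := (2:ℝ)⁻¹) (by norm_num)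
      have h2 : Summable (fun k : ℕ => ((2:ℝ)⁻¹)^k) :=
        summable_geometric_of_lt_one (by norm_num) (by norm_num)
      apply Summable.congr (((h1.mul_left (4*π)).add (h2.mul_left (4*π))))
      intro k; ring
    rw [ENNReal.ofReal_tsum_of_nonneg (fun k => by positivity) hsummable]
    apply ENNReal.tsum_le_tsum
    intro k
    refine le_trans (hAk k) ?_
    rw [← ENNReal.ofReal_mul (by positivity)]
  calc ∫⁻ y in S, f y ∂μH[1] ≤ ∫⁻ y in N, f y ∂μH[1] + ∑' k, ∫⁻ y in A k, f y ∂μH[1] :=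
        le_trans hmono hunion
    _ ≤ 0 + ENNReal.ofReal (∑' k : ℕ, (2*((k:ℝ)+1)) * (2 * π * (2:ℝ)⁻¹^k)) := by
        rw [hNzero]; exact add_le_add le_rfl hsum
    _ < ⊤ := by rw [zero_add]; exact ENNReal.ofReal_lt_top

lemma rot0 (θ : ℝ) (y : Plane) : rot θ y 0 = Real.cos θ * y 0 - Real.sin θ * y 1 := by
  simp [rot, EuclideanSpace.equiv]
lemma rot1 (θ : ℝ) (y : Plane) : rot θ y 1 = Real.sin θ * y 0 + Real.cos θ * y 1 := by
  simp [rot, EuclideanSpace.equiv]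

lemma rot_eq_pt (θ : ℝ) (y : Plane) :
    rot θ y = pt (Real.cos θ * y 0 - Real.sin θ * y 1) (Real.sin θ * y 0 + Real.cos θ * y 1) := rfl

lemma rot_mem_S {θ : ℝ} {y : Plane} (hy : y ∈ S) : rot θ y ∈ S := by
  rw [mem_S_iff] at hy ⊢
  rw [rot0, rot1]
  nlinarith [Real.sin_sq_add_cos_sq θ]

lemma continuous_pt_comp {α : Type*} [TopologicalSpace α] {f g : α → ℝ}
    (hf : Continuous f) (hg : Continuous g) : Continuous (fun x => pt (f x) (g x)) := by
  have h : Continuous (fun x : α => (![f x, g x] : Fin 2 → ℝ)) := by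
    apply continuous_pi
    intro i
    fin_cases i
    · simpa using hf
    · simpa using hg
  exact ((EuclideanSpace.equiv (Fin 2) ℝ).symm.continuous).comp h

lemma continuous_rot_theta (y : Plane) : Continuous (fun θ => rot θ y) := by
  simp only [rot_eq_pt]
  exact continuous_pt_comp (by continuity) (by continuity)

lemma continuous_rot (θ : ℝ) : Continuous (rot θ) := by
  have h0 : Continuous (fun y : Plane => y 0) := (EuclideanSpace.proj (0 : Fin 2)).continuous
  have h1 : Continuous (fun y : Plane => y 1) := (EuclideanSpace.proj (1 : Fin 2)).continuous
  have : rot θ = fun y => pt (Real.cos θ * y 0 - Real.sin θ * y 1)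
      (Real.sin θ * y 0 + Real.cos θ * y 1) := funext fun y => rot_eq_pt θ y
  rw [this]
  exact continuous_pt_comp ((continuous_const.mul h0).sub (continuous_const.mul h1))
    ((continuous_const.mul h0).add (continuous_const.mul h1))

lemma rot_periodic (θ : ℝ) : rot (θ + 2 * π) = rot θ := by
  funext y
  simp only [rot_eq_pt, Real.cos_add_two_pi, Real.sin_add_two_pi]

lemma coords_sq_sum {y : Plane} (hy : y ∈ S) {i j : Fin 2} (hij : i ≠ j) :
    (y i)^2 + (y j)^2 = 1 := by
  rw [mem_S_iff] at hy
  fin_cases i <;> fin_cases j <;> simp_all <;> linarith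

lemma integrable_logsq (j : Fin 2) (hfin : μH[1] S ≠ ⊤) :
    IntegrableOn (fun y : Plane => Real.log ((y j)^2)) S (μH[1] : Measure Plane) := by
  constructor
  · exact (Real.measurable_log.comp (measurable_proj_sq j)).aestronglyMeasurable
  · rw [HasFiniteIntegral]
    have : ∀ y : Plane, (‖Real.log ((y j)^2)‖ₑ) = ENNReal.ofReal |Real.log ((y j)^2)| := by
      intro y
      rw [← Real.enorm_eq_ofReal_abs]
    simp_rw [this]
    exact log_lintegral_lt_top j

lemma one_le_exp_one : (1:ℝ) ≤ Real.exp 1 := by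
  have := Real.add_one_le_exp 1; linarith

lemma gain_core (w : Plane → ℝ) (C₀ M : ℝ) (hC₀ : 0 < C₀) (hCM : C₀ ≤ M)
    (hwlb : ∀ y ∈ S, C₀ ≤ w y) (hwub : ∀ y ∈ S, w y ≤ M)
    (hwm : AEStronglyMeasurable w ((μH[1] : Measure Plane).restrict S))
    (hfin : μH[1] S ≠ ⊤)
    (i j : Fin 2) (hij : i ≠ j) (b : ℝ) (hb0 : 0 < b) (hb1 : b ≤ 1) :
    (∫ y in S, w y * Real.log (2 * (y j)^2) ∂(μH[1] : Measure Plane))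
      + (C₀ * (Real.sqrt b / (2 * Real.sqrt (Real.exp 1))) - M * b * (μH[1] S).toReal)
      ≤ ∫ y in S, w y * Real.log (b * (y i)^2 + (2 - b) * (y j)^2) ∂(μH[1] : Measure Plane) := by
  haveI hFin : IsFiniteMeasure ((μH[1] : Measure Plane).restrict S) :=
    ⟨by rwa [Measure.restrict_apply_univ, lt_top_iff_ne_top]⟩
  have hM0 : 0 < M := lt_of_lt_of_le hC₀ hCM
  have hexp1 : (1:ℝ) ≤ Real.exp 1 := one_le_exp_one
  have hsqe : (1:ℝ) ≤ Real.sqrt (Real.exp 1) := by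
    have h1 := Real.sq_sqrt (le_of_lt (Real.exp_pos 1))
    nlinarith [Real.sqrt_nonneg (Real.exp 1)]
  set ε : ℝ := Real.sqrt b / (2 * Real.sqrt (Real.exp 1)) with hε
  have hε0 : 0 < ε := by
    apply div_pos (Real.sqrt_pos.2 hb0); positivity
  have hsb1 : Real.sqrt b ≤ 1 := by
    have h1 := Real.sq_sqrt hb0.le
    nlinarith [Real.sqrt_nonneg b]
  have hε1 : ε ≤ 1 := by
    rw [hε, div_le_one (by positivity)]
    nlinarith
  have hεsq : ε^2 = b / (4 * Real.exp 1) := by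
    rw [hε, div_pow, mul_pow, Real.sq_sqrt hb0.le, Real.sq_sqrt (Real.exp_pos 1).le]
    ring
  set B : Set Plane := {y : Plane | 0 < y j ∧ y j ≤ ε} ∩ S with hB
  have hBmeas : MeasurableSet B := by
    have habs : Measurable (fun y : Plane => y j) := (EuclideanSpace.proj j).continuous.measurable
    exact (habs measurableSet_Ioc).inter measurable_S
  have hBsub : B ⊆ S := Set.inter_subset_right
  -- pointwise facts
  have hargS : ∀ y ∈ S, b ≤ b * (y i)^2 + (2 - b) * (y j)^2 ∧
      b * (y i)^2 + (2 - b) * (y j)^2 ≤ 2 := by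
    intro y hy
    have h := coords_sq_sum hy hij
    constructor <;> nlinarith [sq_nonneg (y i), sq_nonneg (y j)]
  -- bound on B
  have hDB : ∀ y ∈ B, C₀ ≤ w y * Real.log (b * (y i)^2 + (2 - b) * (y j)^2)
      - w y * Real.log (2 * (y j)^2) := by
    rintro y ⟨⟨hj0, hjε⟩, hyS⟩
    have hsum := coords_sq_sum hyS hij
    have hjsq : (y j)^2 ≤ ε^2 := by nlinarith
    have hjsq' : (y j)^2 ≤ b / (4 * Real.exp 1) := by rw [← hεsq]; exact hjsq
    have hisq : (1:ℝ)/2 ≤ (y i)^2 := by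
      have : b / (4 * Real.exp 1) ≤ 1/2 := by
        rw [div_le_iff₀ (by positivity)]
        nlinarith [Real.exp_pos 1]
      nlinarith
    have hjpos : (0:ℝ) < (y j)^2 := by positivity
    have hargpos : (0:ℝ) < b * (y i)^2 + (2 - b) * (y j)^2 := by nlinarith
    have hratio : Real.exp 1 ≤ (b * (y i)^2 + (2 - b) * (y j)^2) / (2 * (y j)^2) := by
      rw [le_div_iff₀ (by positivity)]
      have h1 : Real.exp 1 * (2 * (y j)^2) ≤ Real.exp 1 * (2 * (b / (4 * Real.exp 1))) := by
        apply mul_le_mul_of_nonneg_left (by linarith) (Real.exp_pos 1).le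
      have h2 : Real.exp 1 * (2 * (b / (4 * Real.exp 1))) = b / 2 := by
        field_simp; ring
      have h3 : b / 2 ≤ b * (y i)^2 := by nlinarith
      have h4 : (0:ℝ) ≤ (2 - b) * (y j)^2 := by nlinarith
      linarith
    have hlog : Real.log (b * (y i)^2 + (2 - b) * (y j)^2) - Real.log (2 * (y j)^2) ≥ 1 := by
      rw [← Real.log_div (ne_of_gt hargpos) (by positivity)]
      calc (1:ℝ) = Real.log (Real.exp 1) := (Real.log_exp 1).symm
        _ ≤ _ := Real.log_le_log (Real.exp_pos 1) hratio
    have hw := hwlb y hyS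
    have heq : w y * Real.log (b * (y i)^2 + (2 - b) * (y j)^2) - w y * Real.log (2 * (y j)^2)
        = w y * (Real.log (b * (y i)^2 + (2 - b) * (y j)^2) - Real.log (2 * (y j)^2)) := by ring
    rw [heq]
    nlinarith
  -- bound on (S \ B) ∩ {y j ≠ 0}
  have hDSB : ∀ y ∈ (S \ B) ∩ {y : Plane | y j ≠ 0},
      -(M * b) ≤ w y * Real.log (b * (y i)^2 + (2 - b) * (y j)^2)
      - w y * Real.log (2 * (y j)^2) := by
    rintro y ⟨⟨hyS, _⟩, hj0⟩
    simp only [Set.mem_setOf_eq] at hj0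
    have hsum := coords_sq_sum hyS hij
    have hjpos : (0:ℝ) < (y j)^2 := by positivity
    have hargpos : (0:ℝ) < b * (y i)^2 + (2 - b) * (y j)^2 := by nlinarith [sq_nonneg (y i)]
    have hbr : Real.log (b * (y i)^2 + (2 - b) * (y j)^2) - Real.log (2 * (y j)^2) ≥ -b := by
      rw [← Real.log_div (ne_of_gt hargpos) (by positivity)]
      have hratio : (1 - b/2 : ℝ) ≤ (b * (y i)^2 + (2 - b) * (y j)^2) / (2 * (y j)^2) := by
        rw [le_div_iff₀ (by positivity)]
        nlinarith [sq_nonneg (y i)]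
      have h1b : (0:ℝ) < 1 - b/2 := by linarith
      have hlg : Real.log (1 - b/2) ≤ Real.log ((b * (y i)^2 + (2 - b) * (y j)^2) / (2 * (y j)^2)) :=
        Real.log_le_log h1b hratio
      have hlb : -b ≤ Real.log (1 - b/2) := by
        have hinv : Real.log ((1 - b/2)⁻¹) ≤ (1 - b/2)⁻¹ - 1 :=
          Real.log_le_sub_one_of_pos (by positivity)
        rw [Real.log_inv] at hinv
        have : (1 - b/2)⁻¹ - 1 ≤ b := by
          rw [inv_eq_one_div, div_sub' (ne_of_gt h1b), div_le_iff₀ h1b]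
          nlinarith
        linarith
      linarith
    have hw1 := hwlb y hyS
    have hw2 := hwub y hyS
    set L := Real.log (b * (y i)^2 + (2 - b) * (y j)^2) - Real.log (2 * (y j)^2) with hL
    rcases le_or_gt 0 L with hL0 | hL0
    · have : 0 ≤ w y * L := mul_nonneg (by linarith) hL0
      have : w y * Real.log (b * (y i)^2 + (2 - b) * (y j)^2) - w y * Real.log (2 * (y j)^2)
          = w y * L := by rw [hL]; ring
      rw [this]
      nlinarith
    · have : w y * Real.log (b * (y i)^2 + (2 - b) * (y j)^2) - w y * Real.log (2 * (y j)^2)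
          = w y * L := by rw [hL]; ring
      rw [this]
      nlinarith
  -- integrability
  set f1 : Plane → ℝ := fun y => w y * Real.log (b * (y i)^2 + (2 - b) * (y j)^2) with hf1
  set f2 : Plane → ℝ := fun y => w y * Real.log (2 * (y j)^2) with hf2
  have hmeas_arg : AEStronglyMeasurable
      (fun y : Plane => Real.log (b * (y i)^2 + (2 - b) * (y j)^2))
      ((μH[1] : Measure Plane).restrict S) :=
    (Real.measurable_log.comp (((measurable_proj_sq i).const_mul b).add
      ((measurable_proj_sq j).const_mul (2 - b)))).aestronglyMeasurable
  have hmeas_2 : AEStronglyMeasurable (fun y : Plane => Real.log (2 * (y j)^2))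
      ((μH[1] : Measure Plane).restrict S) :=
    (Real.measurable_log.comp ((measurable_proj_sq j).const_mul 2)).aestronglyMeasurable
  have hm1 : AEStronglyMeasurable f1 ((μH[1] : Measure Plane).restrict S) := hwm.mul hmeas_arg
  have hm2 : AEStronglyMeasurable f2 ((μH[1] : Measure Plane).restrict S) := hwm.mul hmeas_2
  have haeS : ∀ᵐ y ∂((μH[1] : Measure Plane).restrict S), y ∈ S := ae_restrict_mem measurable_S
  have habsw : ∀ y ∈ S, |w y| ≤ M := by
    intro y hy
    rw [abs_of_pos (lt_of_lt_of_le hC₀ (hwlb y hy))]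
    exact hwub y hy
  have hint1 : IntegrableOn f1 S (μH[1] : Measure Plane) := by
    apply Integrable.mono' (integrable_const (M * (|Real.log b| + Real.log 2))) hm1
    filter_upwards [haeS] with y hy
    obtain ⟨hlo, hhi⟩ := hargS y hy
    have hargpos : (0:ℝ) < b * (y i)^2 + (2 - b) * (y j)^2 := lt_of_lt_of_le hb0 hlo
    have hla : |Real.log (b * (y i)^2 + (2 - b) * (y j)^2)| ≤ |Real.log b| + Real.log 2 := by
      rw [abs_le]
      have hl1 : Real.log b ≤ Real.log (b * (y i)^2 + (2 - b) * (y j)^2) :=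
        Real.log_le_log hb0 hlo
      have hl2 : Real.log (b * (y i)^2 + (2 - b) * (y j)^2) ≤ Real.log 2 :=
        Real.log_le_log hargpos hhi
      have := neg_abs_le (Real.log b)
      have := le_abs_self (Real.log b)
      have := Real.log_nonneg (by norm_num : (1:ℝ) ≤ 2)
      constructor <;> linarith
    rw [hf1, norm_mul, Real.norm_eq_abs, Real.norm_eq_abs]
    have h0 : (0:ℝ) ≤ |Real.log (b * (y i)^2 + (2 - b) * (y j)^2)| := abs_nonneg _
    have h1 := habsw y hy
    nlinarith [abs_nonneg (w y)]
  have hint2 : IntegrableOn f2 S (μH[1] : Measure Plane) := by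
    apply Integrable.mono'
      (g := fun y : Plane => M * Real.log 2 + M * |Real.log ((y j)^2)|)
      ((integrable_const (M * Real.log 2)).add (((integrable_logsq j hfin).abs).const_mul M)) hm2
    filter_upwards [haeS] with y hy
    have hlog2 : (0:ℝ) ≤ Real.log 2 := Real.log_nonneg (by norm_num)
    rw [hf2, norm_mul, Real.norm_eq_abs, Real.norm_eq_abs]
    rcases eq_or_ne (y j) 0 with h0 | h0
    · rw [h0]
      norm_num
      positivity
    · have hjpos : (0:ℝ) < (y j)^2 := by positivity
      have : Real.log (2 * (y j)^2) = Real.log 2 + Real.log ((y j)^2) :=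
        Real.log_mul (by norm_num) (ne_of_gt hjpos)
      rw [this]
      have hla : |Real.log 2 + Real.log ((y j)^2)| ≤ Real.log 2 + |Real.log ((y j)^2)| := by
        refine le_trans (abs_add_le _ _) ?_
        rw [abs_of_nonneg hlog2]
      have h1 := habsw y hy
      nlinarith [abs_nonneg (w y), abs_nonneg (Real.log ((y j)^2)),
        abs_nonneg (Real.log 2 + Real.log ((y j)^2))]
  -- split the integral
  have hintdiff : IntegrableOn (fun y => f1 y - f2 y) S (μH[1] : Measure Plane) :=
    hint1.sub hint2
  have hμB_ne : μH[1] B ≠ ⊤ := ne_top_of_le_ne_top hfin (measure_mono hBsub)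
  have hSdecomp : S = B ∪ (S \ B) := (Set.union_diff_cancel hBsub).symm
  have hSBmeas : MeasurableSet (S \ B) := measurable_S.diff hBmeas
  have hIB : IntegrableOn (fun y => f1 y - f2 y) B (μH[1] : Measure Plane) :=
    hintdiff.mono_set hBsub
  have hISB : IntegrableOn (fun y => f1 y - f2 y) (S \ B) (μH[1] : Measure Plane) :=
    hintdiff.mono_set Set.diff_subset
  have hII : ∫ y in S, (f1 y - f2 y) ∂(μH[1] : Measure Plane)
      = (∫ y in B, (f1 y - f2 y) ∂(μH[1] : Measure Plane))
        + ∫ y in S \ B, (f1 y - f2 y) ∂(μH[1] : Measure Plane) := by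
    have h := setIntegral_union (Set.disjoint_sdiff_right) hSBmeas hIB hISB
    rwa [← hSdecomp] at h
  -- bound on B
  have h1 : C₀ * (μH[1] B).toReal ≤ ∫ y in B, (f1 y - f2 y) ∂(μH[1] : Measure Plane) :=
    setIntegral_ge_of_const_le_real hBmeas hμB_ne (fun y hy => hDB y hy) hIB
  have hεle : ε ≤ (μH[1] B).toReal := by
    have hll := lower j hε0 hε1
    calc ε = (ENNReal.ofReal ε).toReal := (ENNReal.toReal_ofReal hε0.le).symm
      _ ≤ (μH[1] B).toReal := ENNReal.toReal_mono hμB_ne hll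
  -- bound on S \ B
  set T : Set Plane := (S \ B) ∩ {y : Plane | y j ≠ 0} with hT
  have hTmeas : MeasurableSet T := by
    apply hSBmeas.inter
    have : {y : Plane | y j ≠ 0} = (fun y : Plane => y j) ⁻¹' ({0}ᶜ) := rfl
    rw [this]
    exact ((EuclideanSpace.proj j).continuous.measurable) (measurableSet_singleton 0).compl
  have hSBae : (S \ B : Set Plane) =ᵐ[(μH[1] : Measure Plane)] T := by
    rw [MeasureTheory.ae_eq_set]
    constructor
    · apply measure_mono_null ?_ (axis_null j)
      rintro y ⟨⟨hyS, hyB⟩, hyT⟩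
      refine ⟨?_, hyS⟩
      by_contra h0
      exact hyT ⟨⟨hyS, hyB⟩, h0⟩
    · have : T \ (S \ B) = ∅ := by
        rw [Set.diff_eq_empty]
        exact Set.inter_subset_left
      rw [this, measure_empty]
  have hμT_ne : μH[1] T ≠ ⊤ :=
    ne_top_of_le_ne_top hfin (measure_mono (hT ▸ (Set.inter_subset_left.trans Set.diff_subset)))
  have h3 : -(M * b) * (μH[1] T).toReal ≤ ∫ y in T, (f1 y - f2 y) ∂(μH[1] : Measure Plane) :=
    setIntegral_ge_of_const_le_real hTmeas hμT_ne (fun y hy => hDSB y hy)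
      (hintdiff.mono_set (Set.inter_subset_left.trans Set.diff_subset))
  have h2 : ∫ y in S \ B, (f1 y - f2 y) ∂(μH[1] : Measure Plane)
      = ∫ y in T, (f1 y - f2 y) ∂(μH[1] : Measure Plane) :=
    setIntegral_congr_set hSBae
  have hmono_toReal : (μH[1] T).toReal ≤ (μH[1] S).toReal :=
    ENNReal.toReal_mono hfin (measure_mono (Set.inter_subset_left.trans Set.diff_subset))
  have h4 : -(M * b) * (μH[1] S).toReal ≤ -(M * b) * (μH[1] T).toReal := by
    apply mul_le_mul_of_nonpos_left hmono_toReal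
    nlinarith
  have hI12 : (∫ y in S, f1 y ∂(μH[1] : Measure Plane)) - ∫ y in S, f2 y ∂(μH[1] : Measure Plane)
      = ∫ y in S, (f1 y - f2 y) ∂(μH[1] : Measure Plane) := (integral_sub hint1 hint2).symm
  have hC₀ε : C₀ * ε ≤ C₀ * (μH[1] B).toReal := by nlinarith
  have hfinal : C₀ * ε - M * b * (μH[1] S).toReal ≤
      (∫ y in S, f1 y ∂(μH[1] : Measure Plane)) - ∫ y in S, f2 y ∂(μH[1] : Measure Plane) := by
    rw [hI12, hII, h2]
    nlinarith
  have hgoal : C₀ * (Real.sqrt b / (2 * Real.sqrt (Real.exp 1))) = C₀ * ε := by rw [hε]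
  linarith

lemma ae_ne_axis (j : Fin 2) : ∀ᵐ y ∂((μH[1] : Measure Plane).restrict S), y j ≠ 0 := by
  rw [MeasureTheory.ae_iff]
  have : {y : Plane | ¬ y j ≠ 0} = {y : Plane | y j = 0} := by
    ext y; simp
  rw [this, Measure.restrict_apply]
  · exact axis_null j
  · have : {y : Plane | y j = 0} = (fun y : Plane => y j) ⁻¹' {0} := rfl
    rw [this]
    exact ((EuclideanSpace.proj j).continuous.measurable) (measurableSet_singleton 0)

lemma log_arg_bound {β : ℝ} (hβ0 : 0 ≤ β) (hβ2 : β ≤ 2) {y : Plane} (hy : y ∈ S)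
    (h0 : y 0 ≠ 0) (h1 : y 1 ≠ 0) :
    |Real.log (β * (y 0)^2 + (2 - β) * (y 1)^2)| ≤
      Real.log 2 + |Real.log ((y 0)^2)| + |Real.log ((y 1)^2)| := by
  have hsum : (y 0)^2 + (y 1)^2 = 1 := coords_sq_sum hy (by norm_num)
  have h0p : (0:ℝ) < (y 0)^2 := by positivity
  have h1p : (0:ℝ) < (y 1)^2 := by positivity
  have h0le : (y 0)^2 ≤ 1 := by nlinarith
  have h1le : (y 1)^2 ≤ 1 := by nlinarith
  have hple : (y 0)^2 * (y 1)^2 ≤ β * (y 0)^2 + (2 - β) * (y 1)^2 := by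
    rcases le_or_gt β 1 with h | h
    · nlinarith
    · nlinarith
  have hup : β * (y 0)^2 + (2 - β) * (y 1)^2 ≤ 2 := by nlinarith
  have hargpos : (0:ℝ) < β * (y 0)^2 + (2 - β) * (y 1)^2 := lt_of_lt_of_le (by positivity) hple
  have hlogup : Real.log (β * (y 0)^2 + (2 - β) * (y 1)^2) ≤ Real.log 2 :=
    Real.log_le_log hargpos hup
  have hloglo : Real.log ((y 0)^2) + Real.log ((y 1)^2) ≤
      Real.log (β * (y 0)^2 + (2 - β) * (y 1)^2) := by
    rw [← Real.log_mul (ne_of_gt h0p) (ne_of_gt h1p)]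
    exact Real.log_le_log (by positivity) hple
  have hl2 : (0:ℝ) ≤ Real.log 2 := Real.log_nonneg (by norm_num)
  rw [abs_le]
  constructor
  · have := neg_abs_le (Real.log ((y 0)^2))
    have := neg_abs_le (Real.log ((y 1)^2))
    linarith
  · have := abs_nonneg (Real.log ((y 0)^2))
    have := abs_nonneg (Real.log ((y 1)^2))
    linarith

lemma gamma_integral_continuous (Ψ : Plane → ℝ) (M : ℝ) (hM0 : 0 ≤ M)
    (hΨcont : ContinuousOn Ψ S) (hΨub : ∀ y ∈ S, |Ψ y| ≤ M)
    (hfin : μH[1] S ≠ ⊤) :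
    ContinuousOn (fun p : ℝ × ℝ => ∫ y in S, Ψ (rot p.2 y) *
      Real.log (p.1 * (y 0)^2 + (2 - p.1) * (y 1)^2) ∂(μH[1] : Measure Plane))
      (Set.Icc (0:ℝ) 2 ×ˢ Set.univ) := by
  haveI hFin : IsFiniteMeasure ((μH[1] : Measure Plane).restrict S) :=
    ⟨by rwa [Measure.restrict_apply_univ, lt_top_iff_ne_top]⟩
  intro p hp
  apply continuousWithinAt_of_dominated
    (bound := fun y : Plane => M * (Real.log 2 + |Real.log ((y 0)^2)| + |Real.log ((y 1)^2)|))
  · apply Filter.Eventually.of_forall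
    intro x
    apply AEStronglyMeasurable.mul
    · exact ((hΨcont.comp (continuous_rot x.2).continuousOn
        (fun y hy => rot_mem_S hy)).aestronglyMeasurable measurable_S)
    · exact (Real.measurable_log.comp (((measurable_proj_sq 0).const_mul x.1).add
        ((measurable_proj_sq 1).const_mul (2 - x.1)))).aestronglyMeasurable
  · apply eventually_nhdsWithin_of_forall
    rintro x ⟨hx1, -⟩
    filter_upwards [ae_restrict_mem measurable_S, ae_ne_axis 0, ae_ne_axis 1] with y hyS hy0 hy1
    rw [norm_mul, Real.norm_eq_abs, Real.norm_eq_abs]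
    have hb := log_arg_bound hx1.1 hx1.2 hyS hy0 hy1
    have hΨ : |Ψ (rot x.2 y)| ≤ M := hΨub _ (rot_mem_S hyS)
    have := abs_nonneg (Real.log (x.1 * (y 0)^2 + (2 - x.1) * (y 1)^2))
    nlinarith [abs_nonneg (Ψ (rot x.2 y))]
  · apply Integrable.const_mul
    exact ((integrable_const (Real.log 2)).add ((integrable_logsq 0 hfin).abs)).add
      ((integrable_logsq 1 hfin).abs)
  · filter_upwards [ae_restrict_mem measurable_S, ae_ne_axis 0, ae_ne_axis 1] with y hyS hy0 hy1
    apply ContinuousAt.continuousWithinAt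
    apply ContinuousAt.mul
    · have hc : Continuous (fun x : ℝ × ℝ => Ψ (rot x.2 y)) := by
        have h1 : Continuous (fun θ : ℝ => Ψ (rot θ y)) :=
          hΨcont.comp_continuous (continuous_rot_theta y) (fun θ => rot_mem_S hyS)
        exact h1.comp continuous_snd
      exact hc.continuousAt
    · have harg : Continuous (fun x : ℝ × ℝ => x.1 * (y 0)^2 + (2 - x.1) * (y 1)^2) := by
        continuity
      refine ContinuousAt.comp (g := Real.log) ?_ harg.continuousAt
      apply Real.continuousAt_log
      have hsum : (y 0)^2 + (y 1)^2 = 1 := coords_sq_sum hyS (by norm_num)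
      have h0p : (0:ℝ) < (y 0)^2 := by positivity
      have h1p : (0:ℝ) < (y 1)^2 := by positivity
      obtain ⟨hp1, -⟩ := hp
      rcases le_or_gt p.1 1 with h | h
      · nlinarith [hp1.1, hp1.2]
      · nlinarith [hp1.1, hp1.2]

end RE

/-- The reduced energy `γ(β,Q) = -(1/π) ∫_{S¹} Ψ̂(Qy) log(β y₁² + (2-β) y₂²) dH¹(y)` over
`[0,2] × SO(2)` is continuous, attains its minimum at some `(β₀,Q₀)`, and `β₀ ∈ (0,2)`. -/
theorem reduced_energy_min_interior
    (Ψ : Plane → ℝ) (C₀ : ℝ) (hC₀ : 0 < C₀)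
    (hΨcont : ContinuousOn Ψ (Metric.sphere (0 : Plane) 1))
    (hΨlb : ∀ y ∈ Metric.sphere (0 : Plane) 1, C₀ ≤ Ψ y)
    (hΨavg : (1 / (2 * π)) * ∫ y in Metric.sphere (0 : Plane) 1, Ψ y ∂(μH[1]) = 1)
    (γ : ℝ → ℝ → ℝ)
    (hγ : ∀ β θ, γ β θ = -(1 / π) * ∫ y in Metric.sphere (0 : Plane) 1,
        Ψ (rot θ y) * Real.log (β * (y 0) ^ 2 + (2 - β) * (y 1) ^ 2) ∂(μH[1])) :
    ContinuousOn (fun p : ℝ × ℝ => γ p.1 p.2) (Set.Icc (0 : ℝ) 2 ×ˢ Set.univ) ∧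
    ∃ β₀ θ₀ : ℝ, β₀ ∈ Set.Ioo (0 : ℝ) 2 ∧
      ∀ β ∈ Set.Icc (0 : ℝ) 2, ∀ θ : ℝ, γ β₀ θ₀ ≤ γ β θ := by
  rw [← RE.S_eq] at hΨcont hΨlb hΨavg
  simp only [← RE.S_eq] at hγ
  -- Integrability of Ψ on the circle, and finiteness of the measure
  have hΨint : IntegrableOn Ψ RE.S (μH[1] : Measure Plane) := by
    by_contra h
    rw [MeasureTheory.integral_undef h] at hΨavg
    norm_num at hΨavg
  have hfin : μH[1] RE.S ≠ ⊤ := by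
    intro hcon
    have h1 : ENNReal.ofReal C₀ * μH[1] RE.S ≤ ∫⁻ y in RE.S, (‖Ψ y‖₊ : ℝ≥0∞) ∂(μH[1] : Measure Plane) := by
      rw [← MeasureTheory.setLIntegral_const]
      apply lintegral_mono_ae
      filter_upwards [ae_restrict_mem RE.measurable_S] with y hy
      calc ENNReal.ofReal C₀ ≤ ENNReal.ofReal (Ψ y) := ENNReal.ofReal_le_ofReal (hΨlb y hy)
        _ ≤ (‖Ψ y‖₊ : ℝ≥0∞) := Real.ofReal_le_enorm (Ψ y)
    have h2 : ∫⁻ y in RE.S, (‖Ψ y‖₊ : ℝ≥0∞) ∂(μH[1] : Measure Plane) < ⊤ := hΨint.2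
    rw [hcon, ENNReal.mul_top (by simpa using (ENNReal.ofReal_pos.2 hC₀).ne')] at h1
    exact absurd (lt_of_le_of_lt h1 h2) (lt_irrefl ⊤)
  -- upper bound for Ψ
  have hSne : RE.S.Nonempty := by
    refine ⟨RE.pt 1 0, ?_⟩
    rw [RE.mem_S_iff, RE.pt0, RE.pt1]
    norm_num
  obtain ⟨z, hzS, hzmax⟩ := (isCompact_sphere (0:Plane) 1).exists_isMaxOn
    (by rwa [← RE.S_eq]) hΨcont
  set M := Ψ z with hMdef
  have hzS' : z ∈ RE.S := hzS
  have hub : ∀ y ∈ RE.S, Ψ y ≤ M := fun y hy => hzmax hy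
  have hCM : C₀ ≤ M := hΨlb z hzS'
  have hM0 : 0 < M := lt_of_lt_of_le hC₀ hCM
  have hubabs : ∀ y ∈ RE.S, |Ψ y| ≤ M := by
    intro y hy
    rw [abs_of_pos (lt_of_lt_of_le hC₀ (hΨlb y hy))]
    exact hub y hy
  -- continuity
  have hγfun : (fun p : ℝ × ℝ => γ p.1 p.2) = fun p : ℝ × ℝ => -(1 / π) *
      ∫ y in RE.S, Ψ (rot p.2 y) * Real.log (p.1 * (y 0) ^ 2 + (2 - p.1) * (y 1) ^ 2)
        ∂(μH[1] : Measure Plane) := funext fun p => hγ p.1 p.2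
  have hcont : ContinuousOn (fun p : ℝ × ℝ => γ p.1 p.2) (Set.Icc (0 : ℝ) 2 ×ˢ Set.univ) := by
    rw [hγfun]
    exact continuousOn_const.mul
      (RE.gamma_integral_continuous Ψ M hM0.le hΨcont hubabs hfin)
  refine ⟨hcont, ?_⟩
  -- compact minimisation
  set K : Set (ℝ × ℝ) := Set.Icc (0:ℝ) 2 ×ˢ Set.Icc (0:ℝ) (2*π) with hK
  have hKc : IsCompact K := isCompact_Icc.prod isCompact_Icc
  have hKne : K.Nonempty := ⟨(0, 0), by
    constructor
    · exact ⟨le_refl 0, by norm_num⟩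
    · exact ⟨le_refl 0, by positivity⟩⟩
  have hKsub : K ⊆ Set.Icc (0:ℝ) 2 ×ˢ Set.univ := by
    rintro p ⟨h1, h2⟩
    exact ⟨h1, trivial⟩
  obtain ⟨p₀, hp₀K, hp₀min⟩ := hKc.exists_isMinOn hKne (hcont.mono hKsub)
  -- periodicity
  have hper : ∀ β, Function.Periodic (γ β) (2*π) := by
    intro β θ
    rw [hγ, hγ, RE.rot_periodic θ]
  have hmin : ∀ β ∈ Set.Icc (0:ℝ) 2, ∀ θ : ℝ, γ p₀.1 p₀.2 ≤ γ β θ := by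
    intro β hβ θ
    obtain ⟨θ', hθ', hθeq⟩ := (hper β).exists_mem_Ico₀ Real.two_pi_pos θ
    have hmem : (β, θ') ∈ K := ⟨hβ, ⟨hθ'.1, hθ'.2.le⟩⟩
    calc γ p₀.1 p₀.2 ≤ γ β θ' := hp₀min hmem
      _ = γ β θ := hθeq.symm
  -- choice of b
  set m := (μH[1] RE.S).toReal with hmdef
  have hm0 : 0 ≤ m := ENNReal.toReal_nonneg
  have hq1 : (1:ℝ) ≤ Real.sqrt (Real.exp 1) := by
    have h1 := Real.sq_sqrt (le_of_lt (Real.exp_pos 1))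
    have h2 := RE.one_le_exp_one
    nlinarith [Real.sqrt_nonneg (Real.exp 1)]
  have hq0 : (0:ℝ) < Real.sqrt (Real.exp 1) := lt_of_lt_of_le one_pos hq1
  set b : ℝ := min 1 ((C₀ / (2 * Real.sqrt (Real.exp 1) * M * (m+1)))^2) with hbdef
  have hb0 : 0 < b := by
    apply lt_min one_pos
    positivity
  have hb1 : b ≤ 1 := min_le_left _ _
  have hsb : Real.sqrt b ≤ C₀ / (2 * Real.sqrt (Real.exp 1) * M * (m+1)) := by
    have h1 : b ≤ (C₀ / (2 * Real.sqrt (Real.exp 1) * M * (m+1)))^2 := min_le_right _ _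
    calc Real.sqrt b ≤ Real.sqrt ((C₀ / (2 * Real.sqrt (Real.exp 1) * M * (m+1)))^2) :=
          Real.sqrt_le_sqrt h1
      _ = C₀ / (2 * Real.sqrt (Real.exp 1) * M * (m+1)) := Real.sqrt_sq (by positivity)
  have hgainpos : 0 < C₀ * (Real.sqrt b / (2 * Real.sqrt (Real.exp 1))) - M * b * m := by
    set s := Real.sqrt b with hsdef
    have hs0 : 0 < s := Real.sqrt_pos.2 hb0
    have hseq : s^2 = b := Real.sq_sqrt hb0.le
    have hkey : s * (2 * Real.sqrt (Real.exp 1) * M * (m+1)) ≤ C₀ := by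
      rw [← le_div_iff₀ (by positivity)]
      exact hsb
    rw [← hseq]
    rw [sub_pos, mul_div_assoc']
    rw [lt_div_iff₀ (by positivity)]
    have h5 : s * (s * (2 * Real.sqrt (Real.exp 1) * M * (m+1))) ≤ s * C₀ :=
      mul_le_mul_of_nonneg_left hkey hs0.le
    have h6 : 0 < 2 * Real.sqrt (Real.exp 1) * M * (s * s) := by positivity
    nlinarith [h5, h6]
  -- measurable weight
  have hwm : ∀ θ : ℝ, AEStronglyMeasurable (fun y : Plane => Ψ (rot θ y))
      ((μH[1] : Measure Plane).restrict RE.S) := by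
    intro θ
    exact ((hΨcont.comp (RE.continuous_rot θ).continuousOn
      (fun y hy => RE.rot_mem_S hy)).aestronglyMeasurable RE.measurable_S)
  have hwlb : ∀ θ : ℝ, ∀ y ∈ RE.S, C₀ ≤ Ψ (rot θ y) :=
    fun θ y hy => hΨlb _ (RE.rot_mem_S hy)
  have hwub : ∀ θ : ℝ, ∀ y ∈ RE.S, Ψ (rot θ y) ≤ M :=
    fun θ y hy => hub _ (RE.rot_mem_S hy)
  -- endpoint exclusion: β = 0
  have hclaim0 : ∀ θ, γ b θ < γ 0 θ := by
    intro θ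
    have hgc := RE.gain_core (fun y => Ψ (rot θ y)) C₀ M hC₀ hCM (hwlb θ) (hwub θ) (hwm θ) hfin
      0 1 (by norm_num) b hb0 hb1
    have hcongr : (∫ y in RE.S, Ψ (rot θ y) * Real.log ((0:ℝ) * (y 0) ^ 2 + (2 - 0) * (y 1) ^ 2)
        ∂(μH[1] : Measure Plane)) =
        ∫ y in RE.S, Ψ (rot θ y) * Real.log (2 * (y 1) ^ 2) ∂(μH[1] : Measure Plane) := by
      congr 1
      funext y
      norm_num
    have hlt : (∫ y in RE.S, Ψ (rot θ y) * Real.log ((0:ℝ) * (y 0) ^ 2 + (2 - 0) * (y 1) ^ 2)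
        ∂(μH[1] : Measure Plane)) <
        ∫ y in RE.S, Ψ (rot θ y) * Real.log (b * (y 0) ^ 2 + (2 - b) * (y 1) ^ 2)
        ∂(μH[1] : Measure Plane) := by
      rw [hcongr]
      calc _ < _ + (C₀ * (Real.sqrt b / (2 * Real.sqrt (Real.exp 1))) - M * b * m) := by
            linarith
        _ ≤ _ := hgc
    rw [hγ b θ, hγ 0 θ]
    have hπ : (0:ℝ) < 1 / π := by positivity
    have := mul_lt_mul_of_pos_left hlt hπ
    linarith
  -- endpoint exclusion: β = 2
  have hclaim2 : ∀ θ, γ (2 - b) θ < γ 2 θ := by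
    intro θ
    have hgc := RE.gain_core (fun y => Ψ (rot θ y)) C₀ M hC₀ hCM (hwlb θ) (hwub θ) (hwm θ) hfin
      1 0 (by norm_num) b hb0 hb1
    have hcongr : (∫ y in RE.S, Ψ (rot θ y) * Real.log ((2:ℝ) * (y 0) ^ 2 + (2 - 2) * (y 1) ^ 2)
        ∂(μH[1] : Measure Plane)) =
        ∫ y in RE.S, Ψ (rot θ y) * Real.log (2 * (y 0) ^ 2) ∂(μH[1] : Measure Plane) := by
      congr 1
      funext y
      norm_num
    have hcongr2 : (∫ y in RE.S, Ψ (rot θ y) *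
        Real.log ((2 - b) * (y 0) ^ 2 + (2 - (2 - b)) * (y 1) ^ 2) ∂(μH[1] : Measure Plane)) =
        ∫ y in RE.S, Ψ (rot θ y) * Real.log (b * (y 1) ^ 2 + (2 - b) * (y 0) ^ 2)
        ∂(μH[1] : Measure Plane) := by
      congr 1
      funext y
      ring_nf
    have hlt : (∫ y in RE.S, Ψ (rot θ y) * Real.log ((2:ℝ) * (y 0) ^ 2 + (2 - 2) * (y 1) ^ 2)
        ∂(μH[1] : Measure Plane)) <
        ∫ y in RE.S, Ψ (rot θ y) *
          Real.log ((2 - b) * (y 0) ^ 2 + (2 - (2 - b)) * (y 1) ^ 2)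
        ∂(μH[1] : Measure Plane) := by
      rw [hcongr, hcongr2]
      calc _ < _ + (C₀ * (Real.sqrt b / (2 * Real.sqrt (Real.exp 1))) - M * b * m) := by
            linarith
        _ ≤ _ := hgc
    rw [hγ (2-b) θ, hγ 2 θ]
    have hπ : (0:ℝ) < 1 / π := by positivity
    have := mul_lt_mul_of_pos_left hlt hπ
    linarith
  -- conclude
  refine ⟨p₀.1, p₀.2, ⟨?_, ?_⟩, hmin⟩
  · rcases lt_or_ge 0 p₀.1 with h | h
    · exact h
    · exfalso
      have hp1 : p₀.1 = 0 := le_antisymm h hp₀K.1.1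
      have h1 : γ p₀.1 p₀.2 ≤ γ b p₀.2 := hmin b ⟨hb0.le, by linarith⟩ p₀.2
      rw [hp1] at h1
      exact absurd h1 (not_le.2 (hclaim0 p₀.2))
  · rcases lt_or_ge p₀.1 2 with h | h
    · exact h
    · exfalso
      have hp1 : p₀.1 = 2 := le_antisymm hp₀K.1.2 h
      have h1 : γ p₀.1 p₀.2 ≤ γ (2 - b) p₀.2 := hmin (2 - b) ⟨by linarith, by linarith⟩ p₀.2
      rw [hp1] at h1
      exact absurd h1 (not_le.2 (hclaim2 p₀.2))
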